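/- arXiv:1906.02028 — 2 statements merged into one kernel-verified Lean document; each statement's English description precedes it below -/
import Mathlib

section
/- Let n be a natural number, let X be a set of binary strings of length n, and let D = {u ∈ {0,1}^n : u ≤ x for some x ∈ X} be the downward closure of X. Suppose v1, v2, v3, v4 ∈ D form a path in the hypercube Q_n, i.e. v1 is adjacent to v2, v2 is adjacent to v3, v3 is adjacent to v4, and v1, v2, v3, v4 are pairwise distinct. Then either there exists u ∈ D with u ≠ v2 such that u is adjacent to v1 and to v3, or there exists u ∈ D with u ≠ v3 such that u is adjacent to v2 and to v4. -/
lemma hamming_eq_one_iff {α β : Type*} [Fintype α] [DecidableEq β] (u v : α → β) :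
    hammingDist u v = 1 ↔ ∃ i, u i ≠ v i ∧ ∀ j, j ≠ i → u j = v j := by
  rw [hammingDist, Finset.card_eq_one]
  constructor
  · rintro ⟨i, hi⟩
    refine ⟨i, ?_, ?_⟩
    · have : i ∈ Finset.filter (fun i => u i ≠ v i) Finset.univ :=
        hi ▸ Finset.mem_singleton_self i
      simpa using this
    · intro j hj
      by_contra h
      have : j ∈ Finset.filter (fun i => u i ≠ v i) Finset.univ := by simpa using h
      rw [hi, Finset.mem_singleton] at this
      exact hj this
  · rintro ⟨i, h1, h2⟩
    refine ⟨i, ?_⟩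
    ext j
    simp only [Finset.mem_filter, Finset.mem_univ, true_and, Finset.mem_singleton]
    constructor
    · intro hj
      by_contra hji
      exact hj (h2 j hji)
    · rintro rfl; exact h1

lemma bool_ne_eq_not {a b : Bool} (h : a ≠ b) : b = !a := by
  cases a <;> cases b <;> simp_all

/-- The hypercube `Q_n`: vertices are binary strings of length `n`
(functions `Fin n → Bool`), two vertices being adjacent iff they differ
in exactly one coordinate. -/
def hypercube (n : ℕ) : SimpleGraph (Fin n → Bool) where
  Adj u v := hammingDist u v = 1
  symm := by
    constructor
    intro u v h
    rwa [hammingDist_comm]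
  loopless := by
    constructor
    intro u h
    simp [hammingDist_self] at h

lemma hypercube_adj_iff {n : ℕ} (u v : Fin n → Bool) :
    (hypercube n).Adj u v ↔ ∃ i, u i ≠ v i ∧ ∀ j, j ≠ i → u j = v j :=
  hamming_eq_one_iff u v

/-- In a daisy cube, for every path `v₁, v₂, v₃, v₄` on four vertices, either
`v₁` and `v₃` have a common neighbour (inside the daisy cube) different from
`v₂`, or `v₂` and `v₄` have a common neighbour different from `v₃`. -/
theorem daisyCube_path_common_neighbour (n : ℕ) (X : Set (Fin n → Bool))
    (D : Set (Fin n → Bool)) (hD : D = {u : Fin n → Bool | ∃ x ∈ X, u ≤ x})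
    (v₁ v₂ v₃ v₄ : Fin n → Bool)
    (h₁ : v₁ ∈ D) (h₂ : v₂ ∈ D) (h₃ : v₃ ∈ D) (h₄ : v₄ ∈ D)
    (h₁₂ : (hypercube n).Adj v₁ v₂) (h₂₃ : (hypercube n).Adj v₂ v₃)
    (h₃₄ : (hypercube n).Adj v₃ v₄)
    (hne₁₂ : v₁ ≠ v₂) (hne₁₃ : v₁ ≠ v₃) (hne₁₄ : v₁ ≠ v₄)
    (hne₂₃ : v₂ ≠ v₃) (hne₂₄ : v₂ ≠ v₄) (hne₃₄ : v₃ ≠ v₄) :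
    (∃ u ∈ D, u ≠ v₂ ∧ (hypercube n).Adj u v₁ ∧ (hypercube n).Adj u v₃) ∨
    (∃ u ∈ D, u ≠ v₃ ∧ (hypercube n).Adj u v₂ ∧ (hypercube n).Adj u v₄) := by
  subst hD
  obtain ⟨i, hi, hi'⟩ := (hypercube_adj_iff v₁ v₂).mp h₁₂
  obtain ⟨j, hj, hj'⟩ := (hypercube_adj_iff v₂ v₃).mp h₂₃
  obtain ⟨k, hk, hk'⟩ := (hypercube_adj_iff v₃ v₄).mp h₃₄
  have hij : i ≠ j := by
    rintro rfl
    apply hne₁₃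
    funext l
    by_cases hl : l = i
    · subst hl
      cases hv : v₂ l <;> simp_all
    · rw [hi' l hl, hj' l hl]
  have hjk : j ≠ k := by
    rintro rfl
    apply hne₂₄
    funext l
    by_cases hl : l = j
    · subst hl
      cases hv : v₃ l <;> simp_all
    · rw [hj' l hl, hk' l hl]
  have e1 : v₁ i = !v₂ i := by
    have := bool_ne_eq_not hi; cases h : v₂ i <;> simp_all
  have e3 : v₃ j = !v₂ j := bool_ne_eq_not hj
  have e4 : v₄ k = !v₃ k := bool_ne_eq_not hk
  by_cases hik : i = k
  · -- v₁ is a common neighbour of v₂ and v₄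
    subst hik
    right
    refine ⟨v₁, h₁, hne₁₃, h₁₂, (hypercube_adj_iff v₁ v₄).mpr ⟨j, ?_, ?_⟩⟩
    · rw [hi' j (Ne.symm hij), ← hk' j hjk]
      exact hj
    · intro l hl
      by_cases hli : l = i
      · subst hli
        have h23 : v₂ l = v₃ l := hj' l hij
        cases h : v₂ l <;> simp_all
      · rw [hi' l hli, hj' l hl, hk' l hli]
  · by_cases hb : v₂ i = true ∨ v₂ j = true
    · -- common neighbour of v₁ and v₃ : flip both i and j of v₂
      left
      set w : Fin n → Bool := fun l => if l = i then !v₂ i else if l = j then !v₂ j else v₂ l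
        with hw
      have wi : w i = !v₂ i := by simp [hw]
      have wj : w j = !v₂ j := by simp [hw, Ne.symm hij]
      have wl : ∀ l, l ≠ i → l ≠ j → w l = v₂ l := by
        intro l h1 h2; simp [hw, h1, h2]
      refine ⟨w, ?_, ?_, ?_, ?_⟩
      · -- membership in D
        rcases hb with hb | hb
        · obtain ⟨x, hx, hle⟩ := h₃
          refine ⟨x, hx, le_trans ?_ hle⟩
          intro l
          by_cases hl : l = i
          · subst hl; rw [wi, hb]; exact Bool.false_le _
          · by_cases hl2 : l = j
            · subst hl2; rw [wj, ← e3]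
            · rw [wl l hl hl2, hj' l hl2]
        · obtain ⟨x, hx, hle⟩ := h₁
          refine ⟨x, hx, le_trans ?_ hle⟩
          intro l
          by_cases hl : l = j
          · subst hl; rw [wj, hb]; exact Bool.false_le _
          · by_cases hl2 : l = i
            · subst hl2; rw [wi, ← e1]
            · rw [wl l hl2 hl, ← hi' l hl2]
      · intro h
        have : w i = v₂ i := congrFun h i
        rw [wi] at this
        exact (Bool.not_ne_self _) this
      · refine (hypercube_adj_iff w v₁).mpr ⟨j, ?_, ?_⟩
        · rw [wj, hi' j (Ne.symm hij)]
          exact Bool.not_ne_self _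
        · intro l hl
          by_cases hli : l = i
          · subst hli; rw [wi, e1]
          · rw [wl l hli hl, ← hi' l hli]
      · refine (hypercube_adj_iff w v₃).mpr ⟨i, ?_, ?_⟩
        · rw [wi, ← hj' i hij]
          exact Bool.not_ne_self _
        · intro l hl
          by_cases hlj : l = j
          · subst hlj; rw [wj, e3]
          · rw [wl l hl hlj, hj' l hlj]
    · -- v₂ i = false and v₂ j = false ; flip k of v₂
      push_neg at hb
      obtain ⟨hbi, hbj⟩ := hb
      replace hbi : v₂ i = false := by cases h : v₂ i <;> simp_all
      replace hbj : v₂ j = false := by cases h : v₂ j <;> simp_all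
      right
      set w : Fin n → Bool := fun l => if l = k then !v₂ k else v₂ l with hw
      have wk : w k = !v₂ k := by simp [hw]
      have wl : ∀ l, l ≠ k → w l = v₂ l := by intro l h1; simp [hw, h1]
      have v3k : v₃ k = v₂ k := (hj' k (Ne.symm hjk)).symm
      refine ⟨w, ?_, ?_, ?_, ?_⟩
      · cases hvk : v₂ k
        · -- w ≤ v₄
          obtain ⟨x, hx, hle⟩ := h₄
          refine ⟨x, hx, le_trans ?_ hle⟩
          intro l
          by_cases hl : l = k
          · subst hl; rw [wk, e4, v3k]
          · by_cases hl2 : l = j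
            · subst hl2; rw [wl l hl, hbj]; exact Bool.false_le _
            · rw [wl l hl, hj' l hl2, hk' l hl]
        · -- w ≤ v₂
          obtain ⟨x, hx, hle⟩ := h₂
          refine ⟨x, hx, le_trans ?_ hle⟩
          intro l
          by_cases hl : l = k
          · subst hl; rw [wk, hvk]; exact Bool.false_le _
          · rw [wl l hl]
      · intro h
        have : w j = v₃ j := congrFun h j
        rw [wl j hjk, e3] at this
        exact Bool.not_ne_self _ this.symm
      · refine (hypercube_adj_iff w v₂).mpr ⟨k, ?_, ?_⟩
        · rw [wk]; exact Bool.not_ne_self _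
        · intro l hl; exact wl l hl
      · refine (hypercube_adj_iff w v₄).mpr ⟨j, ?_, ?_⟩
        · rw [wl j hjk, ← hk' j hjk, e3]
          exact Ne.symm (Bool.not_ne_self _)
        · intro l hl
          by_cases hlk : l = k
          · subst hlk; rw [wk, e4, v3k]
          · rw [wl l hlk, hj' l hl, hk' l hlk]
end

section
/- Let n be a natural number, let X be a set of binary strings of length n, and let D = {u ∈ {0,1}^n : u ≤ x for some x ∈ X} be the downward closure of X. Then the daisy cube Q_n(X), i.e. the subgraph of Q_n induced by D, is an isometric subgraph of Q_n: for all u, v ∈ D there is a walk from u to v inside D whose length equals the Hamming distance between u and v (so the distance between u and v in the induced subgraph equals their distance in Q_n). -/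
section aux

variable {n : ℕ}

lemma hd_update_self (u v : Fin n → Bool) (i : Fin n) (h : u i ≠ v i) :
    hammingDist u (Function.update u i (v i)) = 1 := by
  unfold hammingDist
  have : ({j | u j ≠ Function.update u i (v i) j} : Finset (Fin n)) = {i} := by
    ext j
    simp only [Finset.mem_filter, Finset.mem_univ, true_and, Finset.mem_singleton,
      Function.update_apply]
    by_cases hj : j = i <;> simp [hj, h]
  rw [this]; simp

lemma hd_update_step (u v : Fin n → Bool) (i : Fin n) (h : u i ≠ v i) :
    hammingDist (Function.update u i (v i)) v + 1 = hammingDist u v := by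
  unfold hammingDist
  have key : ({j | Function.update u i (v i) j ≠ v j} : Finset (Fin n)) =
      ({j | u j ≠ v j} : Finset (Fin n)).erase i := by
    ext j
    simp only [Finset.mem_filter, Finset.mem_univ, true_and, Finset.mem_erase,
      Function.update_apply]
    by_cases hj : j = i <;> simp [hj]
  have hmem : i ∈ ({j | u j ≠ v j} : Finset (Fin n)) := by simp [h]
  rw [key, Finset.card_erase_of_mem hmem]
  have := Finset.card_pos.mpr ⟨i, hmem⟩
  omega

lemma hd_le_walk_length {a b : Fin n → Bool} (w : (hypercube n).Walk a b) :
    hammingDist a b ≤ w.length := by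
  induction w with
  | nil => simp
  | cons h p ih =>
    calc hammingDist _ _ ≤ hammingDist _ _ + hammingDist _ _ := hammingDist_triangle _ _ _
    _ ≤ _ := by rw [h]; simpa [Nat.add_comm] using ih

lemma daisy_walk (X : Set (Fin n → Bool)) (D : Set (Fin n → Bool))
    (hD : D = {u : Fin n → Bool | ∃ x ∈ X, u ≤ x}) :
    ∀ (k : ℕ) (u v : Fin n → Bool) (hu : u ∈ D) (hv : v ∈ D),
      hammingDist u v = k →
      ∃ W : ((hypercube n).induce D).Walk ⟨u, hu⟩ ⟨v, hv⟩, W.length = k := by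
  have hdc : ∀ {a b : Fin n → Bool}, a ∈ D → b ≤ a → b ∈ D := by
    intro a b ha hba
    rw [hD] at ha ⊢
    obtain ⟨x, hx, hax⟩ := ha
    exact ⟨x, hx, le_trans hba hax⟩
  intro k
  induction k with
  | zero =>
    intro u v hu hv h
    have : u = v := hammingDist_eq_zero.mp h
    subst this
    exact ⟨SimpleGraph.Walk.nil, rfl⟩
  | succ k ih =>
    intro u v hu hv h
    have hne : u ≠ v := by
      intro h'; subst h'; simp [hammingDist_self] at h
    -- choose a good coordinate i and show the flipped vertex is in D
    obtain ⟨i, hi, hu'D⟩ :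
        ∃ i, u i ≠ v i ∧ Function.update u i (v i) ∈ D := by
      by_cases hA : ∃ i, u i = true ∧ v i = false
      · obtain ⟨i, hut, hvf⟩ := hA
        refine ⟨i, by simp [hut, hvf], hdc hu ?_⟩
        intro j
        by_cases hj : j = i
        · subst hj; simp [Function.update_self, hvf]
        · simp [Function.update_apply, hj]
      · push_neg at hA
        have huv : u ≤ v := by
          intro j
          cases huj : u j
          · simp
          · have := hA j huj
            cases hvj : v j
            · exact absurd hvj this
            · simp
        obtain ⟨i, hi⟩ : ∃ i, u i ≠ v i := by
          by_contra hc
          push_neg at hc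
          exact hne (funext hc)
        refine ⟨i, hi, hdc hv ?_⟩
        intro j
        by_cases hj : j = i
        · subst hj; simp [Function.update_self]
        · simp only [Function.update_apply, hj, if_false]; exact huv j
    set u' := Function.update u i (v i) with hu'def
    have hadj : ((hypercube n).induce D).Adj ⟨u, hu⟩ ⟨u', hu'D⟩ :=
      hd_update_self u v i hi
    have hd' : hammingDist u' v = k := by
      have h2 := hd_update_step u v i hi
      rw [← hu'def] at h2
      omega
    obtain ⟨W, hW⟩ := ih u' v hu'D hv hd'
    exact ⟨SimpleGraph.Walk.cons hadj W, by simp [hW]⟩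

end aux

/-- The daisy cube `Q_n(X)`, the subgraph of `Q_n` induced by the downward
closure `D` of `X`, is an isometric subgraph of `Q_n`: any two of its vertices
are joined by a walk inside `D` whose length is their Hamming distance, and
hence the induced-subgraph distance coincides with the hypercube distance. -/
theorem daisyCube_isometric (n : ℕ) (X : Set (Fin n → Bool))
    (D : Set (Fin n → Bool)) (hD : D = {u : Fin n → Bool | ∃ x ∈ X, u ≤ x})
    (u v : Fin n → Bool) (hu : u ∈ D) (hv : v ∈ D) :
    (∃ w : (hypercube n).Walk u v,
        (∀ a ∈ w.support, a ∈ D) ∧ w.length = hammingDist u v) ∧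
    ((hypercube n).induce D).dist ⟨u, hu⟩ ⟨v, hv⟩ = (hypercube n).dist u v := by
  obtain ⟨W, hW⟩ := daisy_walk X D hD (hammingDist u v) u v hu hv rfl
  let incl : (hypercube n).induce D →g hypercube n := ⟨Subtype.val, fun h => h⟩
  have hsupp : ∀ a ∈ (W.map incl).support, a ∈ D := by
    intro a ha
    rw [SimpleGraph.Walk.support_map] at ha
    obtain ⟨b, hb, rfl⟩ := List.mem_map.mp ha
    exact b.2
  have hlen : (W.map incl).length = hammingDist u v := by
    rw [SimpleGraph.Walk.length_map, hW]
  refine ⟨⟨W.map incl, hsupp, hlen⟩, ?_⟩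
  -- dist equality
  have h1 : (hypercube n).dist u v = hammingDist u v := by
    apply le_antisymm
    · have := SimpleGraph.dist_le (W.map incl)
      rwa [hlen] at this
    · obtain ⟨p, hp⟩ :=
        (SimpleGraph.Reachable.exists_walk_length_eq_dist ⟨W.map incl⟩)
      exact le_of_le_of_eq (hd_le_walk_length p) hp
  rw [h1]
  apply le_antisymm
  · have := SimpleGraph.dist_le W
    rwa [hW] at this
  · obtain ⟨p, hp⟩ :=
      (SimpleGraph.Reachable.exists_walk_length_eq_dist ⟨W⟩)
    calc hammingDist u v ≤ (p.map incl).length := hd_le_walk_length (p.map incl)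
    _ = p.length := SimpleGraph.Walk.length_map _ _
    _ = _ := hp
end
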